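/- Let h(t) = exp(-a(1+t)/(1-t))/(1-t) on [0,1) for a > 0, and set A(a) = (∫₀¹ t·h(t) dt)/(∫₀¹ h(t) dt). Then 1 - A(a) = (a·∫_a^∞ e^{-2s}/s² ds)/(∫_a^∞ e^{-2s}/s ds), and 1 - A(a) ~ 1/log(1/a) as a → 0⁺ (i.e., the ratio of the two sides tends to 1). -/

import Mathlib

open Filter Set
open MeasureTheory Topology


namespace Stmt8H

noncomputable def g1 (s : ℝ) : ℝ := Real.exp (-2 * s) / s
noncomputable def g2 (s : ℝ) : ℝ := Real.exp (-2 * s) / s ^ 2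
noncomputable def J1 (a : ℝ) : ℝ := ∫ s in Set.Ioi a, g1 s
noncomputable def J2 (a : ℝ) : ℝ := ∫ s in Set.Ioi a, g2 s

lemma contOn_g1 {a : ℝ} (ha : 0 < a) : ContinuousOn g1 (Ioi a) := by
  apply ContinuousOn.div
  · exact (Real.continuous_exp.comp (continuous_const.mul continuous_id)).continuousOn
  · exact continuousOn_id
  · exact fun x hx => ne_of_gt (ha.trans hx)

lemma contOn_g2 {a : ℝ} (ha : 0 < a) : ContinuousOn g2 (Ioi a) := by
  apply ContinuousOn.div
  · exact (Real.continuous_exp.comp (continuous_const.mul continuous_id)).continuousOn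
  · exact (continuous_pow 2).continuousOn
  · exact fun x hx => pow_ne_zero 2 (ne_of_gt (ha.trans hx))

lemma int_g1 {a : ℝ} (ha : 0 < a) : IntegrableOn g1 (Ioi a) := by
  apply Integrable.mono' (((exp_neg_integrableOn_Ioi a (by norm_num : (0:ℝ) < 2))).const_mul a⁻¹)
    ((contOn_g1 ha).aestronglyMeasurable measurableSet_Ioi)
  filter_upwards [ae_restrict_mem measurableSet_Ioi] with s hs
  have hs' : a < s := hs
  rw [Real.norm_eq_abs, g1, abs_div, abs_of_pos (Real.exp_pos _), abs_of_pos (ha.trans hs')]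
  rw [inv_mul_eq_div, div_le_div_iff₀ (ha.trans hs') ha]
  have := Real.exp_pos (-2 * s)
  nlinarith

lemma int_g2 {a : ℝ} (ha : 0 < a) : IntegrableOn g2 (Ioi a) := by
  apply Integrable.mono' (((exp_neg_integrableOn_Ioi a (by norm_num : (0:ℝ) < 2))).const_mul (a^2)⁻¹)
    ((contOn_g2 ha).aestronglyMeasurable measurableSet_Ioi)
  filter_upwards [ae_restrict_mem measurableSet_Ioi] with s hs
  have hs' : a < s := hs
  have hs0 : 0 < s := ha.trans hs'
  rw [Real.norm_eq_abs, g2, abs_div, abs_of_pos (Real.exp_pos _), abs_of_pos (by positivity)]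
  rw [inv_mul_eq_div, div_le_div_iff₀ (by positivity) (by positivity)]
  have h1 := Real.exp_pos (-2 * s)
  have h2 : a ^ 2 ≤ s ^ 2 := by nlinarith
  nlinarith

lemma J1_pos {a : ℝ} (ha : 0 < a) : 0 < J1 a := by
  rw [J1, setIntegral_pos_iff_support_of_nonneg_ae]
  · refine lt_of_lt_of_le ?_ (measure_mono (show Ioi a ⊆ Function.support g1 ∩ Ioi a from ?_))
    · rw [Real.volume_Ioi]; exact ENNReal.zero_lt_top
    · intro s hs
      have hs0 : 0 < s := ha.trans hs
      refine ⟨?_, hs⟩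
      simp only [Function.mem_support, g1]
      positivity
  · filter_upwards [ae_restrict_mem measurableSet_Ioi] with s hs
    have hs0 : 0 < s := ha.trans hs
    rw [g1]; positivity
  · exact int_g1 ha

lemma subst {a : ℝ} (ha : 0 < a) (g : ℝ → ℝ) :
    (∫ s in Ioi a, g s) = ∫ t in Ioo (0:ℝ) 1, (a / (1 - t) ^ 2) * g (a / (1 - t)) := by
  have himg : (fun t : ℝ => a / (1 - t)) '' Ioo 0 1 = Ioi a := by
    ext s
    simp only [mem_image, mem_Ioo, mem_Ioi]
    constructor
    · rintro ⟨t, ⟨ht0, ht1⟩, rfl⟩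
      have h1t : 0 < 1 - t := by linarith
      rw [lt_div_iff₀ h1t]
      nlinarith
    · intro hs
      have hs0 : 0 < s := ha.trans hs
      refine ⟨1 - a / s, ⟨?_, ?_⟩, ?_⟩
      · have : a / s < 1 := (div_lt_one hs0).2 hs
        linarith
      · have : 0 < a / s := div_pos ha hs0
        linarith
      · field_simp; rw [sub_sub_cancel, div_self ha.ne']
  have hderiv : ∀ t ∈ Ioo (0:ℝ) 1,
      HasDerivWithinAt (fun t : ℝ => a / (1 - t)) (a / (1 - t) ^ 2) (Ioo 0 1) t := by
    intro t ht
    obtain ⟨ht0, ht1⟩ := ht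
    have h1t : (1:ℝ) - t ≠ 0 := by intro hc; linarith [sub_pos.2 ht1]
    have h := (hasDerivAt_const t a).div ((hasDerivAt_const t (1:ℝ)).sub (hasDerivAt_id t)) h1t
    simp only [Pi.div_def, Pi.sub_def, id] at h
    exact (h.congr_deriv (by ring)).hasDerivWithinAt
  have hinj : InjOn (fun t : ℝ => a / (1 - t)) (Ioo 0 1) := by
    intro x hx y hy hxy
    obtain ⟨hx0, hx1⟩ := hx
    obtain ⟨hy0, hy1⟩ := hy
    have hx1' : (1:ℝ) - x ≠ 0 := by intro hc; linarith [sub_pos.2 hx1]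
    have hy1' : (1:ℝ) - y ≠ 0 := by intro hc; linarith [sub_pos.2 hy1]
    simp only at hxy
    field_simp at hxy
    linarith
  rw [← himg, integral_image_eq_integral_abs_deriv_smul measurableSet_Ioo hderiv hinj]
  apply setIntegral_congr_fun measurableSet_Ioo
  intro t ht
  obtain ⟨ht0, ht1⟩ := ht
  have h1t : 0 < 1 - t := by linarith
  simp only [smul_eq_mul]
  rw [abs_of_pos (by positivity)]


lemma exp_eq {a t : ℝ} (h1t : (1:ℝ) - t ≠ 0) :
    Real.exp (-2 * (a / (1 - t))) = Real.exp (-a) * Real.exp (-a * (1 + t) / (1 - t)) := by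
  rw [← Real.exp_add]
  congr 1
  field_simp
  ring

noncomputable def k (a t : ℝ) : ℝ := Real.exp (-a * (1 + t) / (1 - t)) / (1 - t)

lemma key1 {a : ℝ} (ha : 0 < a) :
    J1 a = Real.exp (-a) * ∫ t in Ioo (0:ℝ) 1, k a t := by
  rw [J1, subst ha, ← MeasureTheory.integral_const_mul]
  apply setIntegral_congr_fun measurableSet_Ioo
  intro t ht
  obtain ⟨ht0, ht1⟩ := ht
  have h1t : 0 < 1 - t := by linarith
  simp only [g1, k]
  rw [exp_eq (ne_of_gt h1t)]
  field_simp

lemma key2 {a : ℝ} (ha : 0 < a) :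
    a * J2 a = Real.exp (-a) * ∫ t in Ioo (0:ℝ) 1, (1 - t) * k a t := by
  rw [J2, subst ha, ← MeasureTheory.integral_const_mul, ← MeasureTheory.integral_const_mul]
  apply setIntegral_congr_fun measurableSet_Ioo
  intro t ht
  obtain ⟨ht0, ht1⟩ := ht
  have h1t : 0 < 1 - t := by linarith
  simp only [g2, k]
  rw [exp_eq (ne_of_gt h1t)]
  field_simp

lemma k_nonneg {a t : ℝ} (ht : t ∈ Ioo (0:ℝ) 1) : 0 ≤ k a t := by
  obtain ⟨ht0, ht1⟩ := ht
  have h1t : 0 < 1 - t := by linarith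
  rw [k]; positivity

lemma k_bound {a t : ℝ} (ha : 0 < a) (ht : t ∈ Ioo (0:ℝ) 1) : k a t ≤ Real.exp a / (2 * a) := by
  obtain ⟨ht0, ht1⟩ := ht
  have h1t : 0 < 1 - t := by linarith
  have hx : 0 < 2 * a / (1 - t) := by positivity
  have h1 : Real.exp (-(2 * a / (1 - t))) ≤ (1 - t) / (2 * a) := by
    rw [Real.exp_neg]
    have h2 : 2 * a / (1 - t) ≤ Real.exp (2 * a / (1 - t)) := by
      linarith [Real.add_one_le_exp (2 * a / (1 - t))]
    calc (Real.exp (2 * a / (1 - t)))⁻¹ ≤ (2 * a / (1 - t))⁻¹ := inv_anti₀ hx h2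
      _ = (1 - t) / (2 * a) := by rw [inv_div]
  have heq : -a * (1 + t) / (1 - t) = a + -(2 * a / (1 - t)) := by
    field_simp
    ring
  rw [k, heq, Real.exp_add, mul_div_assoc]
  calc Real.exp a * (Real.exp (-(2 * a / (1 - t))) / (1 - t))
      ≤ Real.exp a * (((1 - t) / (2 * a)) / (1 - t)) := by
        apply mul_le_mul_of_nonneg_left _ (Real.exp_pos a).le
        gcongr
    _ = Real.exp a / (2 * a) := by field_simp
  
lemma contOn_k (a : ℝ) : ContinuousOn (k a) (Ioo (0:ℝ) 1) := by
  apply ContinuousOn.div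
  · apply Real.continuous_exp.comp_continuousOn
    apply ContinuousOn.div (by fun_prop) (by fun_prop)
    intro t ht
    obtain ⟨ht0, ht1⟩ := ht
    intro hc; linarith [sub_pos.2 ht1]
  · fun_prop
  · intro t ht
    obtain ⟨ht0, ht1⟩ := ht
    intro hc; linarith [sub_pos.2 ht1]

lemma int_k {a : ℝ} (ha : 0 < a) : IntegrableOn (k a) (Ioo (0:ℝ) 1) := by
  apply Integrable.mono' (integrableOn_const (C := Real.exp a / (2 * a)) measure_Ioo_lt_top.ne)
    ((contOn_k a).aestronglyMeasurable measurableSet_Ioo)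
  filter_upwards [ae_restrict_mem measurableSet_Ioo] with t ht
  rw [Real.norm_eq_abs, abs_of_nonneg (k_nonneg ht)]
  exact k_bound ha ht

lemma int_tk {a : ℝ} (ha : 0 < a) : IntegrableOn (fun t => t * k a t) (Ioo (0:ℝ) 1) := by
  apply Integrable.mono' (integrableOn_const (C := Real.exp a / (2 * a)) measure_Ioo_lt_top.ne)
    ((continuousOn_id.mul (contOn_k a)).aestronglyMeasurable measurableSet_Ioo)
  filter_upwards [ae_restrict_mem measurableSet_Ioo] with t ht
  have ht' := ht
  obtain ⟨ht0, ht1⟩ := ht'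
  simp only [Pi.mul_apply, id_eq]
  rw [Real.norm_eq_abs, abs_of_nonneg (mul_nonneg ht0.le (k_nonneg ht))]
  calc t * k a t ≤ 1 * k a t := mul_le_mul_of_nonneg_right ht1.le (k_nonneg ht)
    _ = k a t := one_mul _
    _ ≤ Real.exp a / (2 * a) := k_bound ha ht

lemma key2' {a : ℝ} (ha : 0 < a) :
    a * J2 a = Real.exp (-a) *
      ((∫ t in Ioo (0:ℝ) 1, k a t) - ∫ t in Ioo (0:ℝ) 1, t * k a t) := by
  rw [key2 ha, ← integral_sub (int_k ha) (int_tk ha)]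
  congr 1
  apply setIntegral_congr_fun measurableSet_Ioo
  intro t _
  ring


lemma intk_pos {a : ℝ} (ha : 0 < a) : 0 < ∫ t in Ioo (0:ℝ) 1, k a t := by
  have h1 : (∫ t in Ioo (0:ℝ) 1, k a t) = Real.exp a * J1 a := by
    rw [key1 ha, ← mul_assoc, ← Real.exp_add]
    simp
  rw [h1]
  exact mul_pos (Real.exp_pos a) (J1_pos ha)

lemma ratio {a : ℝ} (ha : 0 < a) :
    1 - (∫ t in Ioo (0:ℝ) 1, t * k a t) / (∫ t in Ioo (0:ℝ) 1, k a t) = a * J2 a / J1 a := by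
  rw [key2' ha, key1 ha, mul_div_mul_left _ _ (Real.exp_ne_zero (-a)), sub_div,
    div_self (intk_pos ha).ne']

lemma ibp {a : ℝ} (ha : 0 < a) : J2 a = Real.exp (-2 * a) / a - 2 * J1 a := by
  have hint : IntegrableOn (fun s => 2 * g1 s + g2 s) (Ioi a) :=
    ((int_g1 ha).const_mul 2).add (int_g2 ha)
  have hderiv : ∀ s ∈ Ici a, HasDerivAt (fun s : ℝ => -(Real.exp (-2 * s) / s))
      (2 * g1 s + g2 s) s := by
    intro s hs
    have hs0 : s ≠ 0 := (lt_of_lt_of_le ha hs).ne'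
    have h1 : HasDerivAt (fun s : ℝ => Real.exp (-2 * s)) (Real.exp (-2 * s) * (-2)) s := by
      have := (Real.hasDerivAt_exp (-2 * s)).comp s ((hasDerivAt_id s).const_mul (-2 : ℝ))
      simpa [Function.comp_def, mul_comm] using this
    have h2 := (h1.div (hasDerivAt_id s) hs0).neg
    simp only [id] at h2
    refine h2.congr_deriv ?_
    simp only [g1, g2]
    field_simp
    ring
  have htend : Tendsto (fun s : ℝ => -(Real.exp (-2 * s) / s)) atTop (𝓝 0) := by
    rw [show (0:ℝ) = -(0 * 0) by ring]
    apply Tendsto.neg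
    apply Tendsto.congr (fun s => (div_eq_mul_inv _ _).symm)
    apply Tendsto.mul _ tendsto_inv_atTop_zero
    have harg : Tendsto (fun s : ℝ => -2 * s) atTop atBot := by
      apply Tendsto.const_mul_atTop_of_neg (by norm_num : (-2:ℝ) < 0) tendsto_id
    exact Real.tendsto_exp_atBot.comp harg
  have heq := MeasureTheory.integral_Ioi_of_hasDerivAt_of_tendsto' hderiv hint htend
  rw [integral_add ((int_g1 ha).const_mul 2) (int_g2 ha), MeasureTheory.integral_const_mul] at heq
  have : 2 * J1 a + J2 a = 0 - -(Real.exp (-2 * a) / a) := heq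
  linarith


lemma J1_split {a : ℝ} (ha : 0 < a) (ha1 : a < 1) :
    J1 a = (∫ s in Ioc a 1, g1 s) + ∫ s in Ioi (1:ℝ), g1 s := by
  rw [J1, ← Ioc_union_Ioi_eq_Ioi ha1.le,
    setIntegral_union (Ioc_disjoint_Ioi le_rfl) measurableSet_Ioi
      ((int_g1 ha).mono_set Ioc_subset_Ioi_self) ((int_g1 ha).mono_set (Ioi_subset_Ioi ha1.le))]

lemma int_one_div {a : ℝ} (ha : 0 < a) (ha1 : a < 1) :
    IntegrableOn (fun s : ℝ => 1 / s) (Ioc a 1) := by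
  have hc : ContinuousOn (fun s : ℝ => 1 / s) (Icc a 1) := by
    apply ContinuousOn.div continuousOn_const continuousOn_id
    intro s hs
    exact ne_of_gt (lt_of_lt_of_le ha hs.1)
  exact hc.integrableOn_Icc.mono_set Ioc_subset_Icc_self

lemma mid_one_div {a : ℝ} (ha : 0 < a) (ha1 : a < 1) :
    (∫ s in Ioc a 1, 1 / s) = -Real.log a := by
  rw [← intervalIntegral.integral_of_le ha1.le,
    integral_one_div (notMem_uIcc_of_lt ha zero_lt_one), one_div, Real.log_inv]

lemma tail_nonneg {a : ℝ} : 0 ≤ ∫ s in Ioi (1:ℝ), g1 s := by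
  apply setIntegral_nonneg measurableSet_Ioi
  intro s hs
  have hs0 : (0:ℝ) < s := lt_trans zero_lt_one hs
  rw [g1]; positivity

lemma tail_upper {a : ℝ} (ha : 0 < a) (ha1 : a < 1) : (∫ s in Ioi (1:ℝ), g1 s) ≤ 1/2 := by
  have h1 : (∫ s in Ioi (1:ℝ), g1 s) ≤ ∫ s in Ioi (1:ℝ), Real.exp (-1 * s) := by
    apply setIntegral_mono_on ((int_g1 ha).mono_set (Ioi_subset_Ioi ha1.le))
      (exp_neg_integrableOn_Ioi 1 one_pos) measurableSet_Ioi
    intro s hs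
    have hs1 : (1:ℝ) < s := hs
    have hs0 : (0:ℝ) < s := lt_trans zero_lt_one hs1
    calc g1 s ≤ Real.exp (-2 * s) / 1 := by rw [g1]; gcongr
      _ = Real.exp (-2 * s) := div_one _
      _ ≤ Real.exp (-1 * s) := Real.exp_le_exp.2 (by nlinarith)
  have h2 : (∫ s in Ioi (1:ℝ), Real.exp (-1 * s)) = Real.exp (-1) := by
    have := integral_exp_neg_Ioi (1:ℝ)
    rw [← this]
    apply setIntegral_congr_fun measurableSet_Ioi
    intro s _
    norm_num
  have h3 : Real.exp (-1) ≤ 1/2 := by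
    rw [Real.exp_neg]
    have h4 : (2:ℝ) ≤ Real.exp 1 := by linarith [Real.add_one_le_exp 1]
    calc (Real.exp 1)⁻¹ ≤ (2:ℝ)⁻¹ := inv_anti₀ two_pos h4
      _ = 1/2 := by norm_num
  linarith

lemma J1_upper {a : ℝ} (ha : 0 < a) (ha1 : a < 1) : J1 a ≤ -Real.log a + 1/2 := by
  have hmid : (∫ s in Ioc a 1, g1 s) ≤ ∫ s in Ioc a 1, 1 / s := by
    apply setIntegral_mono_on ((int_g1 ha).mono_set Ioc_subset_Ioi_self)
      (int_one_div ha ha1) measurableSet_Ioc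
    intro s hs
    have hs0 : 0 < s := lt_trans ha hs.1
    rw [g1]
    gcongr
    exact Real.exp_le_one_iff.2 (by nlinarith)
  rw [J1_split ha ha1]
  have := tail_upper ha ha1
  rw [mid_one_div ha ha1] at hmid
  linarith

lemma J1_lower {a : ℝ} (ha : 0 < a) (ha1 : a < 1) : -Real.log a - 2 ≤ J1 a := by
  have hint2 : IntegrableOn (fun s : ℝ => 1 / s - 2) (Ioc a 1) :=
    (int_one_div ha ha1).sub (integrableOn_const measure_Ioc_lt_top.ne)
  have hmid : (∫ s in Ioc a 1, (1 / s - 2)) ≤ ∫ s in Ioc a 1, g1 s := by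
    apply setIntegral_mono_on hint2 ((int_g1 ha).mono_set Ioc_subset_Ioi_self) measurableSet_Ioc
    intro s hs
    have hs0 : 0 < s := lt_trans ha hs.1
    have heq : 1 / s - 2 = (1 - 2 * s) / s := by field_simp
    rw [heq, g1, div_le_div_iff_of_pos_right hs0]
    linarith [Real.add_one_le_exp (-2 * s)]
  have hcomp : (∫ s in Ioc a 1, (1 / s - 2)) = -Real.log a - 2 * (1 - a) := by
    rw [integral_sub (int_one_div ha ha1) (integrableOn_const measure_Ioc_lt_top.ne),
      mid_one_div ha ha1, setIntegral_const, measureReal_def, Real.volume_Ioc, smul_eq_mul,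
      ENNReal.toReal_ofReal (by linarith : (0:ℝ) ≤ 1 - a)]
    ring
  rw [J1_split ha ha1]
  have := tail_nonneg (a := a)
  rw [hcomp] at hmid
  nlinarith

lemma tendsto_aJ1 : Tendsto (fun a => a * J1 a) (nhdsWithin 0 (Set.Ioi 0)) (𝓝 0) := by
  have hupper : Tendsto (fun a : ℝ => -(a * Real.log a) + a * (1/2))
      (nhdsWithin 0 (Set.Ioi 0)) (𝓝 0) := by
    have h1 : Tendsto (fun a : ℝ => a * Real.log a) (𝓝 0) (𝓝 0) := by
      have := Real.continuous_mul_log.tendsto 0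
      simpa using this
    have h2 : Tendsto (fun a : ℝ => -(a * Real.log a) + a * (1/2)) (𝓝 0) (𝓝 (-0 + 0 * (1/2))) :=
      h1.neg.add (tendsto_id.mul tendsto_const_nhds)
    simpa using h2.mono_left nhdsWithin_le_nhds
  apply tendsto_of_tendsto_of_tendsto_of_le_of_le' tendsto_const_nhds hupper
  · filter_upwards [Ioo_mem_nhdsGT_of_mem (Set.left_mem_Ico.2 zero_lt_one)] with a ha
    exact mul_nonneg ha.1.le (J1_pos ha.1).le
  · filter_upwards [Ioo_mem_nhdsGT_of_mem (Set.left_mem_Ico.2 zero_lt_one)] with a ha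
    calc a * J1 a ≤ a * (-Real.log a + 1/2) :=
          mul_le_mul_of_nonneg_left (J1_upper ha.1 ha.2) ha.1.le
      _ = -(a * Real.log a) + a * (1/2) := by ring

lemma tendsto_neglog_inv :
    Tendsto (fun a : ℝ => (-Real.log a)⁻¹) (nhdsWithin 0 (Set.Ioi 0)) (𝓝 0) := by
  apply tendsto_inv_atTop_zero.comp
  exact tendsto_neg_atBot_atTop.comp Real.tendsto_log_nhdsGT_zero

lemma tendsto_ratio : Tendsto (fun a => J1 a / (-Real.log a)) (nhdsWithin 0 (Set.Ioi 0)) (𝓝 1) := by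
  have hlow : Tendsto (fun a : ℝ => 1 - 2 * (-Real.log a)⁻¹)
      (nhdsWithin 0 (Set.Ioi 0)) (𝓝 1) := by
    have := ((tendsto_const_nhds : Tendsto (fun _ : ℝ => (1:ℝ))
      (nhdsWithin 0 (Set.Ioi 0)) (𝓝 1))).sub (tendsto_neglog_inv.const_mul 2)
    simpa using this
  have hup : Tendsto (fun a : ℝ => 1 + (1/2) * (-Real.log a)⁻¹)
      (nhdsWithin 0 (Set.Ioi 0)) (𝓝 1) := by
    have := ((tendsto_const_nhds : Tendsto (fun _ : ℝ => (1:ℝ))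
      (nhdsWithin 0 (Set.Ioi 0)) (𝓝 1))).add (tendsto_neglog_inv.const_mul (1/2))
    simpa using this
  apply tendsto_of_tendsto_of_tendsto_of_le_of_le' hlow hup
  · filter_upwards [Ioo_mem_nhdsGT_of_mem (Set.left_mem_Ico.2 zero_lt_one)] with a ha
    have hL : 0 < -Real.log a := by linarith [Real.log_neg ha.1 ha.2]
    have h1 : (-Real.log a - 2) / (-Real.log a) ≤ J1 a / (-Real.log a) :=
      (div_le_div_iff_of_pos_right hL).2 (J1_lower ha.1 ha.2)
    have h2 : (-Real.log a - 2) / (-Real.log a) = 1 - 2 * (-Real.log a)⁻¹ := by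
      rw [sub_div, div_self hL.ne', div_eq_mul_inv]
    linarith
  · filter_upwards [Ioo_mem_nhdsGT_of_mem (Set.left_mem_Ico.2 zero_lt_one)] with a ha
    have hL : 0 < -Real.log a := by linarith [Real.log_neg ha.1 ha.2]
    have h1 : J1 a / (-Real.log a) ≤ (-Real.log a + 1/2) / (-Real.log a) :=
      (div_le_div_iff_of_pos_right hL).2 (J1_upper ha.1 ha.2)
    have h2 : (-Real.log a + 1/2) / (-Real.log a) = 1 + (1/2) * (-Real.log a)⁻¹ := by
      rw [add_div, div_self hL.ne', div_eq_mul_inv]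
    linarith

lemma main2 : Tendsto (fun a => (a * J2 a / J1 a) * Real.log (1/a))
    (nhdsWithin 0 (Set.Ioi 0)) (𝓝 1) := by
  have hf1 : Tendsto (fun a : ℝ => Real.exp (-2 * a) - 2 * (a * J1 a))
      (nhdsWithin 0 (Set.Ioi 0)) (𝓝 1) := by
    have he : Tendsto (fun a : ℝ => Real.exp (-2 * a)) (𝓝 0) (𝓝 1) := by
      have := (Real.continuous_exp.comp (by continuity : Continuous fun a : ℝ => -2 * a)).tendsto 0
      simpa [Function.comp_def] using this
    have := (he.mono_left nhdsWithin_le_nhds).sub (tendsto_aJ1.const_mul 2)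
    simpa using this
  have hf2 : Tendsto (fun a => (J1 a / (-Real.log a))⁻¹) (nhdsWithin 0 (Set.Ioi 0)) (𝓝 1) := by
    simpa using tendsto_ratio.inv₀ one_ne_zero
  have hmul := hf1.mul hf2
  rw [mul_one] at hmul
  apply Tendsto.congr' _ hmul
  filter_upwards [Ioo_mem_nhdsGT_of_mem (Set.left_mem_Ico.2 zero_lt_one)] with a ha
  obtain ⟨ha0, ha1⟩ := ha
  have hJ : J1 a ≠ 0 := (J1_pos ha0).ne'
  have haJ2 : a * J2 a = Real.exp (-2 * a) - 2 * (a * J1 a) := by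
    rw [ibp ha0]
    field_simp
  rw [inv_div, one_div, Real.log_inv, haJ2]
  ring

end Stmt8H


/-- With h(t) = exp(-a(1+t)/(1-t))/(1-t) on [0,1) and
A(a) = (∫₀¹ t h(t) dt)/(∫₀¹ h(t) dt), one has
1 - A(a) = (a ∫_a^∞ e^{-2s}/s² ds)/(∫_a^∞ e^{-2s}/s ds), and
1 - A(a) ~ 1/log(1/a) as a → 0⁺. -/
theorem stmt8 (h : ℝ → ℝ → ℝ)
    (hh : ∀ a t, h a t = Real.exp (-a * (1 + t) / (1 - t)) / (1 - t))
    (A : ℝ → ℝ)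
    (hA : ∀ a, A a = (∫ t in Set.Ioo (0 : ℝ) 1, t * h a t) / (∫ t in Set.Ioo (0 : ℝ) 1, h a t)) :
    (∀ a > 0, 1 - A a =
      (a * ∫ s in Set.Ioi a, Real.exp (-2 * s) / s ^ 2) /
        (∫ s in Set.Ioi a, Real.exp (-2 * s) / s)) ∧
    Tendsto (fun a => (1 - A a) * Real.log (1 / a)) (nhdsWithin 0 (Set.Ioi 0)) (nhds 1) := by
  have hk : ∀ a, h a = Stmt8H.k a := fun a => funext fun t => by rw [hh, Stmt8H.k]
  have hpart1 : ∀ a > 0, 1 - A a = a * Stmt8H.J2 a / Stmt8H.J1 a := by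
    intro a ha
    rw [hA a, hk a]
    exact Stmt8H.ratio ha
  constructor
  · intro a ha
    rw [hpart1 a ha]
    rfl
  · apply Tendsto.congr' _ Stmt8H.main2
    filter_upwards [self_mem_nhdsWithin] with a ha
    rw [hpart1 a ha]
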